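/- Let L > 0 and let ψ : [0,L] → ℝ be Lipschitz with ψ(0) = ψ(L) = 0, and suppose its derivative satisfies ψ'(t) ≥ −c̃ almost everywhere, where c̃ ≥ 0. Then the length of the graph of ψ satisfies ∫₀^L √(1 + ψ'(t)²) dt ≤ L + 2 L c̃. -/

import Mathlib

open Set MeasureTheory
open Filter Topology

private lemma seq_tendsto_deriv (g : ℝ → ℝ) (x d : ℝ) (h : HasDerivAt g d x) :
    Tendsto (fun n : ℕ => (g (x + 1/(n+1)) - g x) / (1/(n+1))) atTop (𝓝 d) := by
  have hs := hasDerivAt_iff_tendsto_slope.mp h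
  have hx : Tendsto (fun n : ℕ => x + 1/(n+1)) atTop (𝓝[≠] x) := by
    apply tendsto_nhdsWithin_of_tendsto_nhds_of_eventually_within
    · simpa using tendsto_const_nhds.add (tendsto_one_div_add_atTop_nhds_zero_nat : Tendsto (fun n : ℕ => 1 / ((n:ℝ) + 1)) atTop (𝓝 0))
    · filter_upwards with n
      have h1 : (0:ℝ) < 1/(n+1) := by positivity
      simp only [mem_compl_iff, mem_singleton_iff]
      intro hEq
      nlinarith [hEq]
  have := hs.comp hx
  convert this using 2 with n
  simp [slope_def_field]

private lemma lipschitz_integral_deriv (K : NNReal) (g : ℝ → ℝ) (hg : LipschitzWith K g)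
    (a b : ℝ) (hab : a ≤ b) : ∫ t in a..b, deriv g t = g b - g a := by
  have hcont : Continuous g := hg.continuous
  have hInt : ∀ y z : ℝ, IntervalIntegrable g volume y z := fun y z =>
    hcont.intervalIntegrable y z
  set h : ℕ → ℝ := fun n => 1/(n+1) with hh
  have hpos : ∀ n, (0:ℝ) < h n := fun n => by positivity
  set F : ℕ → ℝ → ℝ := fun n t => (g (t + h n) - g t) / h n with hF
  -- Step A: value of ∫ F n
  have stepA : ∀ n, ∫ t in a..b, F n t
      = ((∫ t in b..(b + h n), g t) - ∫ t in a..(a + h n), g t) / h n := by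
    intro n
    have e1 : ∫ t in a..b, F n t = ((∫ t in a..b, g (t + h n)) - ∫ t in a..b, g t) / h n := by
      rw [intervalIntegral.integral_div, intervalIntegral.integral_sub]
      · exact (hcont.comp (continuous_id.add continuous_const)).intervalIntegrable a b
      · exact hInt a b
    rw [e1, intervalIntegral.integral_comp_add_right]
    congr 1
    have c1 : (∫ t in a..(a + h n), g t) + ∫ t in (a + h n)..(b + h n), g t
        = ∫ t in a..(b + h n), g t :=
      intervalIntegral.integral_add_adjacent_intervals (hInt _ _) (hInt _ _)
    have c2 : (∫ t in a..b, g t) + ∫ t in b..(b + h n), g t = ∫ t in a..(b + h n), g t :=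
      intervalIntegral.integral_add_adjacent_intervals (hInt _ _) (hInt _ _)
    linarith
  -- Step B: ∫ F n → g b - g a
  have endpt : ∀ c : ℝ, Tendsto (fun n => (∫ t in c..(c + h n), g t) / h n) atTop (𝓝 (g c)) := by
    intro c
    have hG : HasDerivAt (fun u => ∫ x in c..u, g x) (g c) c :=
      intervalIntegral.integral_hasDerivAt_right (hInt c c)
        (hcont.stronglyMeasurableAtFilter _ _) hcont.continuousAt
    have := seq_tendsto_deriv _ c (g c) hG
    apply this.congr
    intro n
    rw [intervalIntegral.integral_same, sub_zero]
  have stepB : Tendsto (fun n => ∫ t in a..b, F n t) atTop (𝓝 (g b - g a)) := by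
    have := (endpt b).sub (endpt a)
    apply this.congr
    intro n
    rw [stepA n]
    ring
  -- Step C: dominated convergence
  have meas : ∀ n, AEStronglyMeasurable (F n) (volume.restrict (Ioc a b)) := fun n =>
    (((hcont.comp (continuous_id.add continuous_const)).sub hcont).div_const _).aestronglyMeasurable
  have h_bound : ∀ n, ∀ᵐ t ∂(volume.restrict (Ioc a b)), ‖F n t‖ ≤ (K : ℝ) := by
    intro n
    filter_upwards with t
    have h1 : |g (t + h n) - g t| ≤ (K : ℝ) * |(t + h n) - t| := by
      simpa [Real.dist_eq] using hg.dist_le_mul (t + h n) t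
    have h2 : |(t + h n) - t| = h n := by
      rw [add_sub_cancel_left, abs_of_pos (hpos n)]
    rw [h2] at h1
    have := hpos n
    rw [Real.norm_eq_abs, hF]
    rw [abs_div, abs_of_pos this]
    rw [div_le_iff₀ this]
    linarith
  have h_lim : ∀ᵐ t ∂(volume.restrict (Ioc a b)),
      Tendsto (fun n => F n t) atTop (𝓝 (deriv g t)) := by
    apply ae_restrict_of_ae
    filter_upwards [hg.ae_differentiableAt] with t ht
    exact seq_tendsto_deriv g t (deriv g t) ht.hasDerivAt
  have stepC : Tendsto (fun n => ∫ t in Ioc a b, F n t) atTop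
      (𝓝 (∫ t in Ioc a b, deriv g t)) :=
    tendsto_integral_of_dominated_convergence _ meas (integrable_const _) h_bound h_lim
  have conv : ∀ f : ℝ → ℝ, ∫ t in a..b, f t = ∫ t in Ioc a b, f t := fun f =>
    intervalIntegral.integral_of_le hab
  rw [conv]
  refine tendsto_nhds_unique ?_ stepB
  apply stepC.congr
  intro n
  rw [conv]

/-- Length estimate for graphs of Lipschitz functions vanishing at both endpoints with a
one-sided slope bound: if `ψ : [0,L] → ℝ` is Lipschitz, `ψ(0) = ψ(L) = 0`, and
`ψ'(t) ≥ −c̃` a.e. with `c̃ ≥ 0`, then `∫₀^L √(1 + ψ'(t)²) dt ≤ L + 2 L c̃`. -/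
theorem stmt_7 (L ctil : ℝ) (hL : 0 < L) (hc : 0 ≤ ctil)
    (ψ : ℝ → ℝ) (K : NNReal) (hψ : LipschitzOnWith K ψ (Icc 0 L))
    (h0 : ψ 0 = 0) (hLval : ψ L = 0)
    (hlow : ∀ᵐ t ∂(volume.restrict (Icc (0:ℝ) L)), -ctil ≤ deriv ψ t) :
    ∫ t in (0:ℝ)..L, Real.sqrt (1 + (deriv ψ t) ^ 2) ≤ L + 2 * L * ctil := by
  obtain ⟨g, hg, heq⟩ := hψ.extend_real
  -- deriv ψ = deriv g on the open interval
  have hderiv_eq : ∀ t ∈ Ioo (0:ℝ) L, deriv ψ t = deriv g t := by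
    intro t ht
    apply Filter.EventuallyEq.deriv_eq
    filter_upwards [Ioo_mem_nhds ht.1 ht.2] with y hy
    exact heq (Ioo_subset_Icc_self hy)
  -- a.e. on Ioc 0 L, t ∈ Ioo 0 L
  have hIoo : ∀ᵐ t ∂(volume.restrict (Ioc (0:ℝ) L)), t ∈ Ioo (0:ℝ) L := by
    have hne : ∀ᵐ (t:ℝ), t ≠ L := by
      rw [ae_iff]
      have : {t : ℝ | ¬ t ≠ L} = {L} := by ext x; simp
      rw [this]
      exact Real.volume_singleton
    filter_upwards [ae_restrict_mem measurableSet_Ioc, ae_restrict_of_ae hne] with t h1 h2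
    exact ⟨h1.1, lt_of_le_of_ne h1.2 h2⟩
  have hae_eq : ∀ᵐ t ∂(volume.restrict (Ioc (0:ℝ) L)), deriv ψ t = deriv g t := by
    filter_upwards [hIoo] with t ht using hderiv_eq t ht
  -- lower bound transferred to Ioc
  have hlow' : ∀ᵐ t ∂(volume.restrict (Ioc (0:ℝ) L)), -ctil ≤ deriv ψ t :=
    ae_mono (Measure.restrict_mono Ioc_subset_Icc_self le_rfl) hlow
  -- uniform bound on deriv g
  have hKb : ∀ t, |deriv g t| ≤ (K : ℝ) := by
    intro t
    have h1 : |deriv g t| = ‖(fderiv ℝ g t) 1‖ := by rw [fderiv_apply_one_eq_deriv]; rfl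
    rw [h1]
    calc ‖(fderiv ℝ g t) 1‖ ≤ ‖fderiv ℝ g t‖ * ‖(1:ℝ)‖ := (fderiv ℝ g t).le_opNorm 1
      _ ≤ (K : ℝ) * 1 := by
          rw [norm_one]
          exact mul_le_mul_of_nonneg_right (norm_fderiv_le_of_lipschitz ℝ hg) zero_le_one
      _ = (K : ℝ) := mul_one _
  -- integrability
  have hmeas_g : AEStronglyMeasurable (deriv g) (volume.restrict (Ioc (0:ℝ) L)) :=
    (measurable_deriv g).aestronglyMeasurable
  have hmeas_ψ : AEStronglyMeasurable (deriv ψ) (volume.restrict (Ioc (0:ℝ) L)) :=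
    (measurable_deriv ψ).aestronglyMeasurable
  have hint_g : IntegrableOn (deriv g) (Ioc (0:ℝ) L) := by
    refine Integrable.mono' (integrable_const (K : ℝ)) hmeas_g ?_
    filter_upwards with t using hKb t
  have hint_lhs : IntegrableOn (fun t => Real.sqrt (1 + (deriv ψ t) ^ 2)) (Ioc (0:ℝ) L) := by
    refine Integrable.mono' (integrable_const (1 + (K : ℝ))) ?_ ?_
    · exact (Real.continuous_sqrt.measurable.comp
        ((measurable_const.add ((measurable_deriv ψ).pow_const 2)))).aestronglyMeasurable
    · filter_upwards [hae_eq] with t ht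
      rw [Real.norm_eq_abs, abs_of_nonneg (Real.sqrt_nonneg _)]
      have h2 : Real.sqrt (1 + (deriv ψ t)^2) ≤ 1 + |deriv ψ t| := by
        rw [show (1:ℝ) + |deriv ψ t| = Real.sqrt ((1 + |deriv ψ t|)^2) from
          (Real.sqrt_sq (by positivity)).symm]
        apply Real.sqrt_le_sqrt
        nlinarith [abs_nonneg (deriv ψ t), sq_abs (deriv ψ t)]
      have h3 : |deriv ψ t| ≤ (K : ℝ) := ht ▸ hKb t
      linarith
  -- pointwise a.e. bound
  have hpt : ∀ᵐ t ∂(volume.restrict (Ioc (0:ℝ) L)),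
      Real.sqrt (1 + (deriv ψ t) ^ 2) ≤ 1 + deriv g t + 2 * ctil := by
    filter_upwards [hae_eq, hlow'] with t h1 h2
    have h3 : Real.sqrt (1 + (deriv ψ t)^2) ≤ 1 + |deriv ψ t| := by
      rw [show (1:ℝ) + |deriv ψ t| = Real.sqrt ((1 + |deriv ψ t|)^2) from
        (Real.sqrt_sq (by positivity)).symm]
      apply Real.sqrt_le_sqrt
      nlinarith [abs_nonneg (deriv ψ t), sq_abs (deriv ψ t)]
    have h4 : |deriv ψ t| ≤ deriv ψ t + 2 * ctil := by
      rcases abs_cases (deriv ψ t) with ⟨he, _⟩ | ⟨he, _⟩ <;> linarith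
    rw [← h1]
    linarith
  -- integrate
  have hint_rhs : IntegrableOn (fun t => 1 + deriv g t + 2 * ctil) (Ioc (0:ℝ) L) :=
    ((integrable_const 1).add hint_g).add (integrable_const (2 * ctil))
  have key : ∫ t in Ioc (0:ℝ) L, Real.sqrt (1 + (deriv ψ t) ^ 2)
      ≤ ∫ t in Ioc (0:ℝ) L, (1 + deriv g t + 2 * ctil) :=
    integral_mono_ae hint_lhs hint_rhs hpt
  have hfin : ∫ t in Ioc (0:ℝ) L, (1 + deriv g t + 2 * ctil) = L + 2 * L * ctil := by
    rw [← intervalIntegral.integral_of_le hL.le]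
    have e1 : ∫ t in (0:ℝ)..L, (1 + deriv g t + 2 * ctil)
        = (∫ t in (0:ℝ)..L, (1:ℝ)) + (∫ t in (0:ℝ)..L, deriv g t)
          + ∫ t in (0:ℝ)..L, (2*ctil) := by
      have i1 : IntervalIntegrable (deriv g) volume 0 L := by
        rw [intervalIntegrable_iff_integrableOn_Ioc_of_le hL.le]; exact hint_g
      rw [intervalIntegral.integral_add (intervalIntegrable_const.add i1) intervalIntegrable_const,
        intervalIntegral.integral_add intervalIntegrable_const i1]
    rw [e1, lipschitz_integral_deriv K g hg 0 L hL.le]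
    have hg0 : g 0 = 0 := by rw [← heq (left_mem_Icc.mpr hL.le)]; exact h0
    have hgL : g L = 0 := by rw [← heq (right_mem_Icc.mpr hL.le)]; exact hLval
    simp [hg0, hgL]
    ring
  rw [intervalIntegral.integral_of_le hL.le]
  calc ∫ t in Ioc (0:ℝ) L, Real.sqrt (1 + (deriv ψ t) ^ 2)
      ≤ ∫ t in Ioc (0:ℝ) L, (1 + deriv g t + 2 * ctil) := key
    _ = L + 2 * L * ctil := hfin
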